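/- Let s₁ ≥ s₂ ≥ … ≥ s_n be reals with s_n ≤ 0 and s₁ = s_max > 0, and let f be convex increasing on [0,∞) with f(0)=0. Define Φ = Σᵢ sᵢ² + Σ_{i=1}^{n-1} f(s_i - s_{i+1}). Then for every integer m ≥ 1 there exists a bound Φ ≥ min over m of [m (s_max/2)² + m f(s_max/(2m))]; in particular Φ ≥ inf_{m ∈ ℕ, m ≥ 1} ( m s_max²/4 + m f(s_max/(2m)) ). -/

import Mathlib

theorem phi_lower_bound_core (n : ℕ) (hn : 2 ≤ n) (s : ℕ → ℝ)
    (hsorted : ∀ i : ℕ, 1 ≤ i → i + 1 ≤ n → s (i + 1) ≤ s i)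
    (hlast : s n ≤ 0) (hmax : 0 < s 1)
    (f : ℝ → ℝ) (hconv : ConvexOn ℝ (Set.Ici 0) f)
    (hmono : MonotoneOn f (Set.Ici 0)) (hf0 : f 0 = 0)
    (Φ : ℝ)
    (hΦ : Φ = ∑ i ∈ Finset.Icc 1 n, (s i) ^ 2 + ∑ i ∈ Finset.Icc 1 (n - 1), f (s i - s (i + 1))) :
    Φ ≥ sInf {x : ℝ | ∃ m : ℕ, 1 ≤ m ∧
      x = (m : ℝ) * (s 1) ^ 2 / 4 + (m : ℝ) * f (s 1 / (2 * m))} := by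
  classical
  set c := s 1 with hc
  have hc2 : 0 < c / 2 := by positivity
  -- existence of an index where s drops below c/2
  have hQ : ∃ i, 1 ≤ i ∧ s i < c / 2 := ⟨n, by omega, lt_of_le_of_lt hlast hc2⟩
  set k := Nat.find hQ with hkdef
  obtain ⟨hk1, hksmall⟩ := Nat.find_spec hQ
  rw [← hkdef] at hk1 hksmall
  have hkn : k ≤ n := Nat.find_le ⟨by omega, lt_of_le_of_lt hlast hc2⟩
  have hk2 : 2 ≤ k := by
    by_contra h
    have hk1' : k = 1 := by omega
    rw [hk1'] at hksmall
    linarith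
  set m := k - 1 with hmdef
  have hm1 : 1 ≤ m := by omega
  have hmk : m + 1 = k := by omega
  have hmn : m + 1 ≤ n := by omega
  have hprefix : ∀ i, 1 ≤ i → i ≤ m → c / 2 ≤ s i := by
    intro i h1 h2
    by_contra h
    have hle : Nat.find hQ ≤ i := Nat.find_le ⟨h1, lt_of_not_ge h⟩
    omega
  -- nonnegativity of gaps
  have hgap : ∀ i, 1 ≤ i → i + 1 ≤ n → 0 ≤ s i - s (i + 1) := by
    intro i h1 h2; linarith [hsorted i h1 h2]
  have hfnonneg : ∀ x : ℝ, 0 ≤ x → 0 ≤ f x := by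
    intro x hx
    calc (0:ℝ) = f 0 := hf0.symm
    _ ≤ f x := hmono (le_refl (0:ℝ)) hx hx
  -- telescoping (general)
  have htel' : ∀ j : ℕ, 1 ≤ j →
      ∑ i ∈ Finset.Icc 1 j, (s i - s (i + 1)) = s 1 - s (j + 1) := by
    intro j hj
    induction j with
    | zero => omega
    | succ j ih =>
      rcases Nat.eq_or_lt_of_le hj with h1 | h1
      · rw [← h1]; simp
      · have hj' : 1 ≤ j := by omega
        rw [Finset.sum_Icc_succ_top (by omega), ih hj']
        ring
  -- sum of squares bound
  have hsq : (m : ℝ) * c ^ 2 / 4 ≤ ∑ i ∈ Finset.Icc 1 n, s i ^ 2 := by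
    have h1 : (m : ℝ) * c ^ 2 / 4 = ∑ _i ∈ Finset.Icc 1 m, (c / 2) ^ 2 := by
      rw [Finset.sum_const, Nat.card_Icc, nsmul_eq_mul]
      push_cast [Nat.add_sub_cancel]
      ring
    rw [h1]
    calc ∑ _i ∈ Finset.Icc 1 m, (c / 2) ^ 2
        ≤ ∑ i ∈ Finset.Icc 1 m, s i ^ 2 := by
          apply Finset.sum_le_sum
          intro i hi
          simp only [Finset.mem_Icc] at hi
          have := hprefix i hi.1 hi.2
          nlinarith
      _ ≤ ∑ i ∈ Finset.Icc 1 n, s i ^ 2 := by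
          apply Finset.sum_le_sum_of_subset_of_nonneg
          · exact Finset.Icc_subset_Icc_right (by omega)
          · intro i _ _; positivity
  -- telescoping sum of gaps
  have htel : ∑ i ∈ Finset.Icc 1 m, (s i - s (i + 1)) = s 1 - s (m + 1) :=
    htel' m hm1
  -- each gap in prefix is within [0, n]
  have hgapmem : ∀ i ∈ Finset.Icc 1 m, s i - s (i + 1) ∈ Set.Ici (0:ℝ) := by
    intro i hi
    simp only [Finset.mem_Icc] at hi
    exact hgap i hi.1 (by omega)
  -- Jensen
  have hcard : (Finset.Icc 1 m).card = m := by rw [Nat.card_Icc]; omega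
  have hmpos : (0:ℝ) < m := by exact_mod_cast hm1
  have hJ : (m : ℝ) * f ((s 1 - s (m + 1)) / m) ≤
      ∑ i ∈ Finset.Icc 1 m, f (s i - s (i + 1)) := by
    have hsum1 : ∑ _i ∈ Finset.Icc 1 m, ((m:ℝ)⁻¹) = 1 := by
      rw [Finset.sum_const, hcard, nsmul_eq_mul]
      field_simp
    have := hconv.map_sum_le (t := Finset.Icc 1 m) (w := fun _ => (m:ℝ)⁻¹)
      (p := fun i => s i - s (i + 1)) (fun i _ => by positivity) hsum1 hgapmem
    simp only [smul_eq_mul, ← Finset.mul_sum] at this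
    rw [htel] at this
    have h2 : (s 1 - s (m + 1)) / m = (m:ℝ)⁻¹ * (s 1 - s (m + 1)) := by
      field_simp
    rw [h2]
    calc (m:ℝ) * f ((m:ℝ)⁻¹ * (s 1 - s (m + 1)))
        ≤ (m:ℝ) * ((m:ℝ)⁻¹ * ∑ i ∈ Finset.Icc 1 m, f (s i - s (i + 1))) :=
          mul_le_mul_of_nonneg_left this hmpos.le
      _ = ∑ i ∈ Finset.Icc 1 m, f (s i - s (i + 1)) := by field_simp
  -- average gap is at least c/(2m)
  have havg : c / (2 * m) ≤ (s 1 - s (m + 1)) / m := by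
    have h1 : s (m + 1) < c / 2 := by rw [hmk]; exact hksmall
    rw [div_le_div_iff₀ (by positivity) hmpos]
    have : c / (2 * m) * m = c / 2 := by field_simp
    nlinarith
  have hfavg : f (c / (2 * m)) ≤ f ((s 1 - s (m + 1)) / m) := by
    apply hmono (Set.mem_Ici.mpr (by positivity))
    · have h1 : s (m + 1) < c / 2 := by rw [hmk]; exact hksmall
      have : (0:ℝ) ≤ s 1 - s (m + 1) := by linarith
      exact div_nonneg this hmpos.le
    · exact havg
  -- gap sum bound
  have hgapsum : (m : ℝ) * f (c / (2 * m)) ≤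
      ∑ i ∈ Finset.Icc 1 (n - 1), f (s i - s (i + 1)) := by
    calc (m : ℝ) * f (c / (2 * m))
        ≤ (m : ℝ) * f ((s 1 - s (m + 1)) / m) :=
          mul_le_mul_of_nonneg_left hfavg hmpos.le
      _ ≤ ∑ i ∈ Finset.Icc 1 m, f (s i - s (i + 1)) := hJ
      _ ≤ ∑ i ∈ Finset.Icc 1 (n - 1), f (s i - s (i + 1)) := by
          apply Finset.sum_le_sum_of_subset_of_nonneg
          · exact Finset.Icc_subset_Icc_right (by omega)
          · intro i hi _
            simp only [Finset.mem_Icc] at hi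
            exact hfnonneg _ (hgap i hi.1 (by omega))
  -- conclude
  have hx : (m : ℝ) * c ^ 2 / 4 + (m : ℝ) * f (c / (2 * m)) ≤ Φ := by
    rw [hΦ]; exact add_le_add hsq hgapsum
  have hmem : (m : ℝ) * c ^ 2 / 4 + (m : ℝ) * f (c / (2 * m)) ∈
      {x : ℝ | ∃ m : ℕ, 1 ≤ m ∧
        x = (m : ℝ) * (s 1) ^ 2 / 4 + (m : ℝ) * f (s 1 / (2 * m))} := ⟨m, hm1, rfl⟩
  have hbdd : BddBelow {x : ℝ | ∃ m : ℕ, 1 ≤ m ∧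
      x = (m : ℝ) * (s 1) ^ 2 / 4 + (m : ℝ) * f (s 1 / (2 * m))} := by
    refine ⟨0, ?_⟩
    rintro x ⟨M, hM1, rfl⟩
    have hMpos : (0:ℝ) < M := by exact_mod_cast hM1
    have h1 : 0 ≤ f (s 1 / (2 * M)) := hfnonneg _ (div_nonneg hmax.le (by positivity))
    have h2 : (0:ℝ) ≤ (M : ℝ) * s 1 ^ 2 / 4 := by positivity
    have h3 : (0:ℝ) ≤ (M : ℝ) * f (s 1 / (2 * M)) := mul_nonneg hMpos.le h1
    linarith
  exact le_trans (csInf_le hbdd hmem) hx
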